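/- Under the stability condition β̄p(n₀−1) < n₀δ̄ and the replacement process assumptions, limsup_{t→∞} E[V²(x(t))] ≤ [μE[Θ⁴](μ + 2n₀δ̄ − 2β̄p(n₀−1)) + μ²E[Θ²](2E[Θ²](n₀−1) + 1)] / [2n₀(μ + 2n₀δ̄ − 2β̄p(n₀−1))²]. -/

import Mathlib

open Filter Real

/-- Gronwall-type lemma: if `f' ≤ a f + c` on `[T, ∞)` with `a < 0`, then
eventually `f ≤ -c/a + ε`. -/
lemma gron_aux (a c T : ℝ) (ha : a < 0) (f : ℝ → ℝ) (hf : Differentiable ℝ f)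
    (h : ∀ t, T ≤ t → deriv f t ≤ a * f t + c) (ε : ℝ) (hε : 0 < ε) :
    ∀ᶠ t in atTop, f t ≤ -c / a + ε := by
  have ha' : a ≠ 0 := ne_of_lt ha
  set L : ℝ := -c / a with hL
  have haL : a * L + c = 0 := by rw [hL]; field_simp; ring
  set g : ℝ → ℝ := fun t => (f t - L) * Real.exp (-a * t) with hg
  have hgd : ∀ t, HasDerivAt g ((deriv f t - a * f t - c) * Real.exp (-a * t)) t := by
    intro t
    have h1 : HasDerivAt (fun t => f t - L) (deriv f t) t :=
      ((hf t).hasDerivAt).sub_const L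
    have h2 : HasDerivAt (fun t : ℝ => Real.exp (-a * t)) (Real.exp (-a * t) * (-a)) t := by
      have h3 : HasDerivAt (fun t : ℝ => -a * t) (-a) t := by
        simpa using (hasDerivAt_id t).const_mul (-a)
      exact h3.exp
    have h4 := h1.mul h2
    refine h4.congr_deriv ?_
    linear_combination (Real.exp (-a * t)) * haL
  have hanti : AntitoneOn g (Set.Ici T) := by
    apply antitoneOn_of_deriv_nonpos (convex_Ici T)
    · exact ((hf.continuous.sub continuous_const).mul
        (Real.continuous_exp.comp (continuous_const.mul continuous_id))).continuousOn
    · exact fun x _ => (hgd x).differentiableAt.differentiableWithinAt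
    · intro x hx
      rw [interior_Ici] at hx
      rw [(hgd x).deriv]
      have hx' : T ≤ x := le_of_lt hx
      have := h x hx'
      nlinarith [Real.exp_pos (-a * x)]
  have key : ∀ t, T ≤ t → f t ≤ L + (f T - L) * Real.exp (-a * T) * Real.exp (a * t) := by
    intro t ht
    have hgt : g t ≤ g T := hanti Set.self_mem_Ici ht ht
    have h4 : (f t - L) * Real.exp (-a * t) ≤ (f T - L) * Real.exp (-a * T) := hgt
    have h5 := mul_le_mul_of_nonneg_right h4 (le_of_lt (Real.exp_pos (a * t)))
    have h6 : (f t - L) * Real.exp (-a * t) * Real.exp (a * t) = f t - L := by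
      rw [mul_assoc, ← Real.exp_add]
      simp
    rw [h6] at h5
    linarith
  have hten : Tendsto (fun t => (f T - L) * Real.exp (-a * T) * Real.exp (a * t)) atTop (nhds 0) := by
    have h1 : Tendsto (fun t : ℝ => a * t) atTop atBot :=
      (tendsto_const_mul_atBot_of_neg ha).2 tendsto_id
    have h2 := Real.tendsto_exp_atBot.comp h1
    simpa using h2.const_mul ((f T - L) * Real.exp (-a * T))
  have hev := hten.eventually (gt_mem_nhds hε)
  filter_upwards [hev, eventually_ge_atTop T] with t h1 h2
  have := key t h2
  linarith

lemma limsup_le_aux (f : ℝ → ℝ) (X : ℝ) (hX : 0 ≤ X)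
    (h : ∀ δ : ℝ, 0 < δ → ∀ᶠ t in atTop, f t ≤ X + δ) : limsup f atTop ≤ X := by
  rw [Filter.limsup_eq]
  by_cases hb : BddBelow {a : ℝ | ∀ᶠ t in atTop, f t ≤ a}
  · apply le_of_forall_pos_le_add
    intro δ hδ
    exact csInf_le hb (h δ hδ)
  · rw [Real.sInf_of_not_bddBelow hb]
    exact hX

set_option maxHeartbeats 1000000 in
theorem stmt_13 (n₀ : ℕ) (hn₀ : 1 ≤ n₀) (βbar δbar μ p : ℝ)
    (hβ : 0 < βbar) (hδ : 0 < δbar) (hμ : 0 < μ) (hp : 0 < p) (hp1 : p < 1)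
    (hstab : βbar * p * (n₀ - 1) < n₀ * δbar)
    (EΘ2 EΘ4 : ℝ) (hEΘ2 : 0 ≤ EΘ2) (hEΘ4 : 0 ≤ EΘ4)
    (EV EV2 : ℝ → ℝ) (hEVdiff : Differentiable ℝ EV) (hEV2diff : Differentiable ℝ EV2)
    (hEV : ∀ t, 0 ≤ t → deriv EV t
      ≤ ((2 * βbar * p * (n₀ - 1) - 2 * n₀ * δbar - μ) / n₀) * EV t + μ * EΘ2 / n₀)
    (hEV2 : ∀ t, 0 ≤ t → deriv EV2 t
      ≤ (2 * (2 * βbar * p * (n₀ - 1) - 2 * n₀ * δbar - μ) / n₀) * EV2 t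
        + (μ * (2 * EΘ2 * (n₀ - 1) + 1) / n₀ ^ 2) * EV t + μ * EΘ4 / n₀ ^ 2) :
    limsup EV2 atTop
      ≤ (μ * EΘ4 * (μ + 2 * n₀ * δbar - 2 * βbar * p * (n₀ - 1))
          + μ ^ 2 * EΘ2 * (2 * EΘ2 * (n₀ - 1) + 1))
        / (2 * n₀ * (μ + 2 * n₀ * δbar - 2 * βbar * p * (n₀ - 1)) ^ 2) := by
  set n : ℝ := (n₀ : ℝ) with hn
  have hn1 : (1 : ℝ) ≤ n := by rw [hn]; exact_mod_cast hn₀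
  have hnpos : (0 : ℝ) < n := by linarith
  have hn0 : n ≠ 0 := ne_of_gt hnpos
  set K : ℝ := μ + 2 * n * δbar - 2 * βbar * p * (n - 1) with hK
  have hKpos : 0 < K := by
    have : βbar * p * (n - 1) < n * δbar := hstab
    simp only [hK]; nlinarith
  have hK0 : K ≠ 0 := ne_of_gt hKpos
  set a : ℝ := (2 * βbar * p * (n - 1) - 2 * n * δbar - μ) / n with ha
  have haneg : a < 0 := by
    rw [ha]
    apply div_neg_of_neg_of_pos _ hnpos
    nlinarith
  have hAK : a = -K / n := by rw [ha, hK]; ring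
  set c1 : ℝ := μ * EΘ2 / n with hc1
  set L1 : ℝ := μ * EΘ2 / K with hL1
  have hL1eq : -c1 / a = L1 := by
    rw [hc1, hL1, hAK]
    field_simp
  have hL1nn : 0 ≤ L1 := by
    rw [hL1]; positivity
  set b : ℝ := μ * (2 * EΘ2 * (n - 1) + 1) / n ^ 2 with hb
  have hbnn : 0 ≤ b := by
    rw [hb]
    apply div_nonneg _ (by positivity)
    have : 0 ≤ 2 * EΘ2 * (n - 1) := by nlinarith
    nlinarith
  set d : ℝ := μ * EΘ4 / n ^ 2 with hd
  set a2 : ℝ := 2 * a with ha2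
  have ha2neg : a2 < 0 := by rw [ha2]; linarith
  have ha2' : a2 ≠ 0 := ne_of_lt ha2neg
  set X : ℝ := (μ * EΘ4 * K + μ ^ 2 * EΘ2 * (2 * EΘ2 * (n - 1) + 1)) / (2 * n * K ^ 2) with hX
  have hXnn : 0 ≤ X := by
    rw [hX]
    apply div_nonneg _ (by positivity)
    have h1 : 0 ≤ μ * EΘ4 * K := by positivity
    have h2 : 0 ≤ 2 * EΘ2 * (n - 1) := by nlinarith
    have h3 : 0 ≤ μ ^ 2 * EΘ2 * (2 * EΘ2 * (n - 1) + 1) :=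
      mul_nonneg (by positivity) (by linarith)
    linarith
  clear_value X a2 d b L1 c1 a K n
  -- the key algebraic identity
  have hbase : ∀ e : ℝ, -(b * (L1 + e) + d) / a2 = X + b * e / (-a2) := by
    intro e
    rw [hb, hd, ha2, hAK, hX, hL1]
    field_simp
    ring
  apply limsup_le_aux EV2 X hXnn
  intro δ hδ
  set M : ℝ := b / (-a2) + 1 with hM
  have hMpos : 0 < M := by
    rw [hM]
    have : 0 ≤ b / (-a2) := div_nonneg hbnn (by linarith)
    linarith
  clear_value M
  set e : ℝ := δ / (2 * M) with he
  have hepos : 0 < e := by rw [he]; positivity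
  clear_value e
  -- step 1 : eventually EV t ≤ L1 + e
  have step1 : ∀ᶠ t in atTop, EV t ≤ L1 + e := by
    have := gron_aux a c1 0 haneg EV hEVdiff (fun t ht => hEV t ht) e hepos
    rw [hL1eq] at this
    exact this
  obtain ⟨T0, hT0⟩ := eventually_atTop.1 step1
  set T : ℝ := max T0 0 with hT
  have hTderiv : ∀ t, T ≤ t → deriv EV2 t ≤ a2 * EV2 t + (b * (L1 + e) + d) := by
    intro t ht
    have ht0 : (0 : ℝ) ≤ t := le_trans (le_max_right T0 0) ht
    have htT0 : T0 ≤ t := le_trans (le_max_left T0 0) ht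
    have h1 := hEV2 t ht0
    have h2 : EV t ≤ L1 + e := hT0 t htT0
    have h3 : b * EV t ≤ b * (L1 + e) := mul_le_mul_of_nonneg_left h2 hbnn
    have heq : (2 * (2 * βbar * p * (n - 1) - 2 * n * δbar - μ) / n) = a2 := by
      rw [ha2, ha]; ring
    rw [heq] at h1
    linarith
  have step2 := gron_aux a2 (b * (L1 + e) + d) T ha2neg EV2 hEV2diff hTderiv (δ / 2) (by linarith)
  have hbd : -(b * (L1 + e) + d) / a2 + δ / 2 ≤ X + δ := by
    rw [hbase e]
    have hble : b / (-a2) ≤ M := by rw [hM]; linarith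
    have h1 : b * e / (-a2) ≤ M * e := by
      have heq : b * e / (-a2) = (b / (-a2)) * e := by ring
      rw [heq]
      exact mul_le_mul_of_nonneg_right hble (le_of_lt hepos)
    have hM0 : M ≠ 0 := ne_of_gt hMpos
    have h2 : M * e = δ / 2 := by
      rw [he]
      field_simp
    linarith
  filter_upwards [step2] with t ht
  linarith
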